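/- For each R ∈ ℂ except finitely many, the n-th iterate of f(x) = R - x² has exactly 2^n distinct fixed points in ℂ; equivalently, the polynomial f^[n](x) - x of degree 2^n has no repeated root for generic R. In particular, at R = 0 the polynomial -x^{2^n} - x has no repeated root. -/

import Mathlib

open Polynomial

private noncomputable def Pn (n : ℕ) : Polynomial (Polynomial ℂ) :=
  (fun q => C Polynomial.X - q ^ 2)^[n] Polynomial.X

private lemma Pn_succ (n : ℕ) : Pn (n+1) = C Polynomial.X - (Pn n)^2 :=
  Function.iterate_succ_apply' _ _ _

private lemma Pn_zero : Pn 0 = Polynomial.X := rfl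

private lemma eval_map_Pn (r x : ℂ) :
    ∀ n, ((Pn n).map (evalRingHom r)).eval x = (fun y : ℂ => r - y ^ 2)^[n] x := by
  intro n
  induction n with
  | zero => simp [Pn_zero]
  | succ m ih =>
      rw [Pn_succ, Function.iterate_succ_apply']
      simp only [Polynomial.map_sub, Polynomial.map_pow, map_C, eval_sub, eval_C, eval_pow]
      rw [ih]
      simp

private lemma sq_monic : ∀ m, ((Pn m) ^ 2).Monic ∧ ((Pn m) ^ 2).natDegree = 2 ^ (m + 1) := by
  intro m
  induction m with
  | zero =>
      constructor
      · simpa [Pn_zero] using (monic_X (R := Polynomial ℂ)).pow 2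
      · simp [Pn_zero]
  | succ k ih =>
      have hrw : (Pn (k+1)) ^ 2 = ((Pn k) ^ 2 + -(C (Polynomial.X : Polynomial ℂ))) ^ 2 := by
        rw [Pn_succ]; ring
      have hdlt : (-(C (Polynomial.X : Polynomial ℂ))).degree < ((Pn k) ^ 2).degree := by
        rw [degree_neg, degree_eq_natDegree ih.1.ne_zero, ih.2]
        refine lt_of_le_of_lt degree_C_le ?_
        exact_mod_cast pow_pos (by norm_num : (0:ℕ) < 2) (k+1)
      have hmon : ((Pn k) ^ 2 + -(C (Polynomial.X : Polynomial ℂ))).Monic := ih.1.add_of_left hdlt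
      constructor
      · rw [hrw]; exact hmon.pow 2
      · rw [hrw, natDegree_pow,
          natDegree_eq_of_degree_eq (degree_add_eq_left_of_degree_lt hdlt), ih.2]
        rw [pow_succ 2 (k+1)]
        ring

private noncomputable def Qp (n : ℕ) : Polynomial (Polynomial ℂ) := Polynomial.X - Pn n

private lemma Qp_monic (m : ℕ) : (Qp (m+1)).Monic ∧ (Qp (m+1)).natDegree = 2 ^ (m+1) := by
  have hrw : Qp (m+1) = (Pn m) ^ 2 + (Polynomial.X - C Polynomial.X) := by
    unfold Qp; rw [Pn_succ]; ring
  have hdlt : (Polynomial.X - C (Polynomial.X : Polynomial ℂ)).degree < ((Pn m) ^ 2).degree := by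
    rw [degree_eq_natDegree (sq_monic m).1.ne_zero, (sq_monic m).2]
    refine lt_of_le_of_lt (degree_sub_le _ _) ?_
    refine max_lt ?_ ?_
    · rw [degree_X]
      exact_mod_cast Nat.one_lt_two_pow_iff.mpr (Nat.succ_ne_zero m)
    · refine lt_of_le_of_lt degree_C_le ?_
      exact_mod_cast pow_pos (by norm_num : (0:ℕ) < 2) (m+1)
  constructor
  · rw [hrw]; exact (sq_monic m).1.add_of_left hdlt
  · rw [hrw, natDegree_eq_of_degree_eq (degree_add_eq_left_of_degree_lt hdlt), (sq_monic m).2]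

private lemma map_Pn_zero : ∀ m, (Pn (m+1)).map (evalRingHom 0) = -(Polynomial.X ^ (2 ^ (m+1))) := by
  intro m
  induction m with
  | zero =>
      rw [Pn_succ, Pn_zero]
      simp only [Polynomial.map_sub, map_C, Polynomial.map_pow, map_X]
      simp
  | succ k ih =>
      rw [Pn_succ]
      simp only [Polynomial.map_sub, map_C, Polynomial.map_pow, ih]
      rw [show ((2:ℕ) ^ (k+1+1)) = 2 ^ (k+1) * 2 from pow_succ 2 (k+1)]
      simp [pow_mul]

private lemma map_Qp_zero (m : ℕ) :
    (Qp (m+1)).map (evalRingHom 0) = Polynomial.X ^ (2 ^ (m+1)) + Polynomial.X := by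
  unfold Qp
  rw [Polynomial.map_sub, map_Pn_zero, map_X]
  ring

private lemma sep_aux (j : ℕ) : (Polynomial.X ^ (j+2) + Polynomial.X : Polynomial ℂ).Separable := by
  have h1 : ((j:ℂ)+1) ≠ 0 := Nat.cast_add_one_ne_zero j
  have hd : derivative (X ^ (j+2) + X : Polynomial ℂ) = (C ((j:ℂ)+1) + 1) * X^(j+1) + 1 := by
    simp [derivative_X_pow]
  refine ⟨C (((j:ℂ)+1)⁻¹) * (-((C ((j:ℂ)+1) + 1)^2 * X^j)),
      C (((j:ℂ)+1)⁻¹) * (C ((j:ℂ)+1) + (C ((j:ℂ)+1) + 1) * X^(j+1)), ?_⟩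
  rw [hd]
  have key : (-((C ((j:ℂ)+1) + 1)^2 * X^j)) * (X^(j+2)+X)
      + (C ((j:ℂ)+1) + (C ((j:ℂ)+1) + 1)*X^(j+1)) * ((C ((j:ℂ)+1) + 1)*X^(j+1)+1)
      = C ((j:ℂ)+1) := by ring
  calc C (((j:ℂ)+1)⁻¹) * (-((C ((j:ℂ)+1) + 1)^2 * X^j)) * (X^(j+2)+X)
        + C (((j:ℂ)+1)⁻¹) * (C ((j:ℂ)+1) + (C ((j:ℂ)+1) + 1) * X^(j+1)) * ((C ((j:ℂ)+1) + 1)*X^(j+1)+1)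
      = C (((j:ℂ)+1)⁻¹) * ((-((C ((j:ℂ)+1) + 1)^2 * X^j)) * (X^(j+2)+X)
        + (C ((j:ℂ)+1) + (C ((j:ℂ)+1) + 1)*X^(j+1)) * ((C ((j:ℂ)+1) + 1)*X^(j+1)+1)) := by ring
    _ = 1 := by rw [key, ← C_mul, inv_mul_cancel₀ h1, C_1]

private lemma two_pow_eq (m : ℕ) : ∃ j : ℕ, 2 ^ (m+1) = j + 2 :=
  ⟨2 ^ (m+1) - 2, by have := Nat.one_lt_two_pow_iff.mpr (Nat.succ_ne_zero m); omega⟩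

private lemma sep_zero (m : ℕ) : ((Qp (m+1)).map (evalRingHom 0)).Separable := by
  obtain ⟨j, hj⟩ := two_pow_eq m
  rw [map_Qp_zero, hj]
  exact sep_aux j

private lemma key (m : ℕ) :
    ∃ d : Polynomial ℂ, d ≠ 0 ∧ ∀ r : ℂ, d.eval r ≠ 0 →
      (((Qp (m+1)).map (evalRingHom r)).Separable) := by
  classical
  set K := FractionRing (Polynomial ℂ) with hK
  have hinj : Function.Injective (algebraMap (Polynomial ℂ) K) :=
    IsFractionRing.injective (Polynomial ℂ) K
  have hchar : CharZero K := charZero_of_injective_algebraMap hinj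
  have hQm := (Qp_monic m).1
  have hsf0 : Squarefree ((Qp (m+1)).map (evalRingHom 0)) := (sep_zero m).squarefree
  have hsfK : Squarefree ((Qp (m+1)).map (algebraMap (Polynomial ℂ) K)) := by
    intro q hq
    by_contra hqu
    have hQK0 : (Qp (m+1)).map (algebraMap (Polynomial ℂ) K) ≠ 0 := (hQm.map _).ne_zero
    have hq0 : q ≠ 0 := by
      rintro rfl
      exact hQK0 (zero_dvd_iff.mp (by simpa using hq))
    set q' := q * C q.leadingCoeff⁻¹ with hq'def
    have hq'm : q'.Monic := monic_mul_leadingCoeff_inv hq0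
    have hq'q : q' ∣ q :=
      ⟨C q.leadingCoeff, by
        rw [hq'def, mul_assoc, ← C_mul, inv_mul_cancel₀ (leadingCoeff_ne_zero.mpr hq0), C_1,
          mul_one]⟩
    have hq'dvd : q' ∣ (Qp (m+1)).map (algebraMap (Polynomial ℂ) K) :=
      hq'q.trans ((dvd_mul_left q q).trans hq)
    obtain ⟨g, hg⟩ := IsIntegrallyClosed.eq_map_mul_C_of_dvd K hQm hq'dvd
    rw [hq'm.leadingCoeff, C_1, mul_one] at hg
    have hgm : g.Monic := monic_of_injective hinj (by rw [hg]; exact hq'm)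
    have hdvd2 : g ^ 2 ∣ Qp (m+1) := by
      refine Monic.dvd_of_fraction_map_dvd_fraction_map (K := K) hQm (hgm.pow _) ?_
      rw [Polynomial.map_pow, hg, sq]
      obtain ⟨h, hh⟩ := hq
      refine ⟨C q.leadingCoeff * C q.leadingCoeff * h, ?_⟩
      have hu : C q.leadingCoeff⁻¹ * C q.leadingCoeff = (1 : Polynomial K) := by
        rw [← C_mul, inv_mul_cancel₀ (leadingCoeff_ne_zero.mpr hq0), C_1]
      rw [hh, hq'def]
      linear_combination (-(q * q * h) * (C q.leadingCoeff⁻¹ * C q.leadingCoeff + 1)) * hu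
    obtain ⟨h, hh⟩ := hdvd2
    have hdvd0 : (g.map (evalRingHom 0)) * (g.map (evalRingHom 0)) ∣
        (Qp (m+1)).map (evalRingHom 0) :=
      ⟨h.map (evalRingHom 0), by rw [hh, Polynomial.map_mul, Polynomial.map_pow, sq]⟩
    have hunit := hsf0 _ hdvd0
    have hqdeg : q.natDegree ≠ 0 := by
      intro h0
      exact hqu (isUnit_iff_degree_eq_zero.mpr (by rw [degree_eq_natDegree hq0, h0]; rfl))
    have h1 : q'.natDegree = q.natDegree :=
      natDegree_mul_C (inv_ne_zero (leadingCoeff_ne_zero.mpr hq0))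
    have h2 : g.natDegree = q'.natDegree := by
      rw [← natDegree_map_eq_of_injective hinj g, hg]
    have h3 : (g.map (evalRingHom 0)).natDegree = g.natDegree := hgm.natDegree_map _
    have := natDegree_eq_zero_of_isUnit hunit
    omega
  have hsep : ((Qp (m+1)).map (algebraMap (Polynomial ℂ) K)).Separable :=
    (PerfectField.separable_iff_squarefree).mpr hsfK
  obtain ⟨a, b, hab⟩ := hsep
  obtain ⟨ca, hca⟩ :=
    IsLocalization.integerNormalization_map_to_map (nonZeroDivisors (Polynomial ℂ)) a
  obtain ⟨cb, hcb⟩ :=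
    IsLocalization.integerNormalization_map_to_map (nonZeroDivisors (Polynomial ℂ)) b
  set a' := IsLocalization.integerNormalization (nonZeroDivisors (Polynomial ℂ)) a with ha'
  set b' := IsLocalization.integerNormalization (nonZeroDivisors (Polynomial ℂ)) b with hb'
  set d : Polynomial ℂ := (ca : Polynomial ℂ) * (cb : Polynomial ℂ) with hd
  have hd0 : d ≠ 0 := mul_ne_zero (nonZeroDivisors.coe_ne_zero ca) (nonZeroDivisors.coe_ne_zero cb)
  have hsm : ∀ (c : Polynomial ℂ) (p : Polynomial K),
      c • p = C (algebraMap (Polynomial ℂ) K c) * p := by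
    intro c p
    rw [← algebraMap_smul K c p, Polynomial.smul_eq_C_mul]
  have main : (C (cb : Polynomial ℂ) * a') * (Qp (m+1))
      + (C (ca : Polynomial ℂ) * b') * derivative (Qp (m+1)) = C d := by
    apply Polynomial.map_injective (algebraMap (Polynomial ℂ) K) hinj
    simp only [Polynomial.map_add, Polynomial.map_mul, map_C]
    rw [hca, hcb, hsm, hsm, ← derivative_map, hd, map_mul, C_mul]
    linear_combination (C (algebraMap (Polynomial ℂ) K (ca : Polynomial ℂ))
      * C (algebraMap (Polynomial ℂ) K (cb : Polynomial ℂ))) * hab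
  refine ⟨d, hd0, fun r hr => ?_⟩
  have spec := congrArg (Polynomial.map (evalRingHom r)) main
  simp only [Polynomial.map_add, Polynomial.map_mul, map_C, ← derivative_map,
    coe_evalRingHom] at spec
  have h2 : C (d.eval r)⁻¹ * C (d.eval r) = (1 : Polynomial ℂ) := by
    rw [← C_mul, inv_mul_cancel₀ hr, C_1]
  exact ⟨C (d.eval r)⁻¹ * (C (((cb : Polynomial ℂ)).eval r) * (a'.map (evalRingHom r))),
    C (d.eval r)⁻¹ * (C (((ca : Polynomial ℂ)).eval r) * (b'.map (evalRingHom r))),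
    by linear_combination (C (d.eval r)⁻¹) * spec + h2⟩

/-- For all but finitely many `R ∈ ℂ`, the `n`-th iterate of `f(x) = R - x²`
has exactly `2^n` distinct fixed points; in particular, at `R = 0` the
polynomial `-x^(2^n) - x` has no repeated root. -/
theorem generic_iterate_fixed_points (n : ℕ) (hn : 0 < n) :
    {R : ℂ | Set.ncard {x : ℂ | (fun y : ℂ => R - y ^ 2)^[n] x = x} ≠ 2 ^ n}.Finite ∧
    (-(Polynomial.X ^ (2 ^ n)) - Polynomial.X : Polynomial ℂ).roots.Nodup := by
  obtain ⟨m, rfl⟩ : ∃ m, n = m + 1 := ⟨n - 1, by omega⟩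
  constructor
  · obtain ⟨d, hd0, hsep⟩ := key m
    refine Set.Finite.subset (finite_setOf_isRoot hd0) ?_
    intro r hr
    simp only [Set.mem_setOf_eq] at hr ⊢
    by_contra hroot
    apply hr
    have hs := hsep r hroot
    set Qr := (Qp (m+1)).map (evalRingHom r) with hQr
    have hmon : Qr.Monic := (Qp_monic m).1.map _
    have hdeg : Qr.natDegree = 2 ^ (m+1) := by
      rw [hQr, (Qp_monic m).1.natDegree_map, (Qp_monic m).2]
    have hev : ∀ x : ℂ, Qr.eval x = x - (fun y : ℂ => r - y ^ 2)^[m+1] x := by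
      intro x
      rw [hQr]
      unfold Qp
      rw [Polynomial.map_sub, map_X, eval_sub, eval_X, eval_map_Pn]
    have hset : {x : ℂ | (fun y : ℂ => r - y ^ 2)^[m+1] x = x} = ↑(Qr.roots.toFinset) := by
      ext x
      simp only [Set.mem_setOf_eq, Multiset.mem_toFinset, Finset.mem_coe,
        mem_roots hmon.ne_zero, IsRoot.def, hev, sub_eq_zero, eq_comm]
      exact (eq_comm.trans sub_eq_zero).symm
    have hsplit : Splits Qr := IsAlgClosed.splits Qr
    have hcard := hsplit.natDegree_eq_card_roots
    rw [hset, Set.ncard_coe_finset, Multiset.toFinset_card_of_nodup (nodup_roots hs),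
      ← hcard, hdeg]
  · have hneg : (-(Polynomial.X ^ (2 ^ (m+1))) - Polynomial.X : Polynomial ℂ)
        = -(Polynomial.X ^ (2 ^ (m+1)) + Polynomial.X) := by ring
    rw [hneg, roots_neg]
    obtain ⟨j, hj⟩ := two_pow_eq m
    rw [hj]
    exact nodup_roots (sep_aux j)
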